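/- For N ≥ 3, the closure of Ω_N := ⋃_{λ ∈ 𝕋} (λΠ)^N is a proper subset of ℂ^N. In particular, the point z = (1, e^{2πi/N}, …, e^{2πi(N−1)/N}) does not belong to the closure of Ω_N. -/

import Mathlib

open Complex Real

def Omega (N : ℕ) : Set (Fin N → ℂ) :=
  {z | ∃ l : ℂ, ‖l‖ = 1 ∧ ∀ k, ∃ w : ℂ, 0 < w.re ∧ z k = l * w}

-- closure of Omega is contained in the "closed half-plane" version
lemma closure_Omega_subset (N : ℕ) :
    closure (Omega N) ⊆
      {z | ∃ l : ℂ, ‖l‖ = 1 ∧ ∀ k, 0 ≤ ((starRingEnd ℂ) l * z k).re} := by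
  intro z hz
  rw [mem_closure_iff_seq_limit] at hz
  obtain ⟨u, hu, hconv⟩ := hz
  choose l habs hw using hu
  choose w hwpos hweq using hw
  have hmem : ∀ n, l n ∈ Metric.sphere (0 : ℂ) 1 := by
    intro n
    simp [Complex.dist_eq, habs n]
  obtain ⟨l₀, hl₀, φ, hφ, hlconv⟩ :=
    (isCompact_sphere (0 : ℂ) 1).tendsto_subseq hmem
  have habs0 : ‖l₀‖ = 1 := by
    simpa [Complex.dist_eq] using hl₀
  refine ⟨l₀, habs0, fun k => ?_⟩
  have huφ : Filter.Tendsto (fun n => u (φ n) k) Filter.atTop (nhds (z k)) :=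
    ((continuous_apply k).tendsto z).comp (hconv.comp hφ.tendsto_atTop)
  have hlφ : Filter.Tendsto (fun n => (starRingEnd ℂ) (l (φ n))) Filter.atTop
      (nhds ((starRingEnd ℂ) l₀)) :=
    (Complex.continuous_conj.tendsto l₀).comp hlconv
  have hT : Filter.Tendsto (fun n => ((starRingEnd ℂ) (l (φ n)) * u (φ n) k).re)
      Filter.atTop (nhds (((starRingEnd ℂ) l₀ * z k).re)) :=
    (Complex.continuous_re.tendsto _).comp (hlφ.mul huφ)
  refine ge_of_tendsto' hT fun n => ?_
  have h1 : (starRingEnd ℂ) (l (φ n)) * l (φ n) = 1 := by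
    rw [mul_comm, Complex.mul_conj, Complex.normSq_eq_norm_sq, habs (φ n)]
    norm_num
  rw [hweq (φ n) k, ← mul_assoc, h1, one_mul]
  exact (hwpos (φ n) k).le

theorem stmt_5 (N : ℕ) (hN : 3 ≤ N) :
    closure (Omega N) ≠ Set.univ ∧
      (fun k : Fin N => Complex.exp (2 * Real.pi * Complex.I * (k : ℕ) / N)) ∉
        closure (Omega N) := by
  have key : (fun k : Fin N => Complex.exp (2 * Real.pi * Complex.I * (k : ℕ) / N)) ∉
      closure (Omega N) := by
    intro hmem
    obtain ⟨l, habs, hnn⟩ := closure_Omega_subset N hmem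
    set c := (starRingEnd ℂ) l with hc
    set x := Complex.exp (2 * Real.pi * Complex.I / N) with hxdef
    have hNne : (N : ℕ) ≠ 0 := by omega
    have hx : IsPrimitiveRoot x N := Complex.isPrimitiveRoot_exp N hNne
    have hx1 : x ≠ 1 := hx.ne_one (by omega)
    have hrep : ∀ k : Fin N, Complex.exp (2 * Real.pi * Complex.I * (k : ℕ) / N) =
        x ^ (k : ℕ) := by
      intro k
      rw [hxdef, ← Complex.exp_nat_mul]
      congr 1
      push_cast
      ring
    have hsum : ∑ k : Fin N, Complex.exp (2 * Real.pi * Complex.I * (k : ℕ) / N) = 0 := by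
      simp_rw [hrep]
      rw [Fin.sum_univ_eq_sum_range (fun i => x ^ i) N, geom_sum_eq hx1,
        hx.pow_eq_one]
      simp
    have hs0 : ∑ k : Fin N, (c * Complex.exp (2 * Real.pi * Complex.I * (k : ℕ) / N)).re
        = 0 := by
      rw [← Complex.re_sum, ← Finset.mul_sum, hsum, mul_zero, Complex.zero_re]
    have hall : ∀ k : Fin N,
        (c * Complex.exp (2 * Real.pi * Complex.I * (k : ℕ) / N)).re = 0 := by
      intro k
      have := (Finset.sum_eq_zero_iff_of_nonneg (fun k _ => hnn k)).mp hs0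
      exact this k (Finset.mem_univ k)
    -- k = 0 gives c.re = 0
    have hcre : c.re = 0 := by
      have h0 := hall ⟨0, by omega⟩
      simpa using h0
    -- k = 1 gives c.im = 0
    have hcim : c.im = 0 := by
      have h1 := hall ⟨1, by omega⟩
      have hexp : (2 * (Real.pi:ℂ) * Complex.I * ((1:ℕ):ℂ) / N)
          = ((2 * Real.pi / N : ℝ) : ℂ) * Complex.I := by
        push_cast
        ring
      rw [hexp] at h1
      have hsin : Real.sin (2 * Real.pi / N) > 0 := by
        apply Real.sin_pos_of_pos_of_lt_pi
        · positivity
        · rw [div_lt_iff₀ (by positivity)]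
          have h3 : (3:ℝ) ≤ N := by exact_mod_cast hN
          nlinarith [Real.pi_pos, mul_le_mul_of_nonneg_left h3 Real.pi_pos.le]
      have hre : (Complex.exp (((2 * Real.pi / N : ℝ) : ℂ) * Complex.I)).re
          = Real.cos (2 * Real.pi / N) := Complex.exp_ofReal_mul_I_re _
      have him : (Complex.exp (((2 * Real.pi / N : ℝ) : ℂ) * Complex.I)).im
          = Real.sin (2 * Real.pi / N) := Complex.exp_ofReal_mul_I_im _
      rw [Complex.mul_re, hre, him, hcre] at h1
      have : c.im * Real.sin (2 * Real.pi / N) = 0 := by linarith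
      rcases mul_eq_zero.mp this with h | h
      · exact h
      · linarith
    have : c = 0 := Complex.ext hcre hcim
    have : ‖l‖ = 0 := by
      rw [← Complex.norm_conj]
      rw [← hc, this]
      simp
    rw [habs] at this
    norm_num at this
  exact ⟨fun h => key (h ▸ Set.mem_univ _), key⟩
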